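/- Let μ be a probability measure such that every tail-measurable bounded function is μ-a.s. constant (tail triviality), and suppose μ is invariant under a countable family of commuting invertible measure-preserving transformations a_x, x ∈ Z^d, with the property that any two configurations in a full-measure invariant set differing in finitely many coordinates are related by a finite composition of the a_x and their inverses. Then every function f ∈ L^2(μ) satisfying f = a_x f = a_x^{-1} f μ-a.s. for all x is μ-a.s. constant. -/

import Mathlib

/- The Abelian sandpile model on ℤ^d.  Sites are `Fin d → ℤ`; the toppling matrix is
`Δ_{xx} = 2d`, `Δ_{xy} = -1` for nearest neighbours, `0` otherwise.  Toppling in volume `V`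
uses the matrix restricted to `V` (grains leaving `V` disappear).  `LegalSeq V η l η'`
says that `l` is a sequence of legal topplings in `V` taking `η` to `η'`. -/

open scoped Classical

abbrev Site (d : ℕ) := Fin d → ℤ

def adjacent {d : ℕ} (x y : Site d) : Prop := (∑ i, |x i - y i|) = 1

noncomputable def lap (d : ℕ) (x y : Site d) : ℤ :=
  if x = y then 2 * d else if adjacent x y then -1 else 0

abbrev Config (d : ℕ) := Site d → ℤ

noncomputable def lapV {d : ℕ} (V : Finset (Site d)) (x y : Site d) : ℤ :=
  if x ∈ V ∧ y ∈ V then lap d x y else 0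

noncomputable def topple {d : ℕ} (V : Finset (Site d)) (x : Site d) (η : Config d) :
    Config d := fun y => η y - lapV V x y

def Stable {d : ℕ} (V : Finset (Site d)) (η : Config d) : Prop := ∀ x ∈ V, η x ≤ 2 * d

/-- `l` is a sequence of legal topplings in volume `V` carrying `η` to `η'`. -/
def LegalSeq {d : ℕ} (V : Finset (Site d)) : Config d → List (Site d) → Config d → Prop
  | η, [], η' => η' = η
  | η, x :: l, η' => x ∈ V ∧ (2 * d : ℤ) < η x ∧ LegalSeq V (topple V x η) l η'

noncomputable def addGrain {d : ℕ} (x : Site d) (η : Config d) : Config d :=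
  fun y => if y = x then η y + 1 else η y


open MeasureTheory

abbrev Cfg (d : ℕ) := Site d → Fin (2 * d)

/-- A function is tail measurable if for every `n` it depends only on the coordinates at
sites `x` with `|x| ≥ n`. -/
def TailMeasurableFun (d : ℕ) (g : Cfg d → ℝ) : Prop :=
  ∀ n : ℕ, ∃ h : ({x : Site d // n ≤ ∑ i, (x i).natAbs} → Fin (2 * d)) → ℝ,
    ∀ η : Cfg d, g η = h fun x => η x.1

private lemma finite_ball {d : ℕ} (n : ℕ) :
    {x : Site d | ¬ n ≤ ∑ i, (x i).natAbs}.Finite := by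
  apply Set.Finite.subset
    (Set.Finite.pi (fun i : Fin d => Set.finite_Icc (-(n : ℤ)) n))
  intro x hx
  simp only [Set.mem_setOf_eq, not_le] at hx
  simp only [Set.mem_pi, Set.mem_univ, Set.mem_Icc, forall_true_left]
  intro i
  have h1 : (x i).natAbs < n :=
    lt_of_le_of_lt (Finset.single_le_sum (f := fun j => (x j).natAbs)
      (fun j _ => Nat.zero_le _) (Finset.mem_univ i)) hx
  omega

private lemma aux_bounded {d : ℕ}
    (μ : Measure (Cfg d)) [IsProbabilityMeasure μ]
    (a b : Site d → Cfg d → Cfg d)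
    (hmp : ∀ x : Site d, MeasurePreserving (a x) μ μ ∧ MeasurePreserving (b x) μ μ)
    (htail : ∀ g : Cfg d → ℝ, (∃ C, ∀ η, |g η| ≤ C) → TailMeasurableFun d g →
      ∃ c : ℝ, g =ᵐ[μ] fun _ => c)
    (hfull : ∃ Ω₀ : Set (Cfg d), μ Ω₀ = 1 ∧
      (∀ η ∈ Ω₀, ∀ x : Site d, a x η ∈ Ω₀ ∧ b x η ∈ Ω₀) ∧
      (∀ η ∈ Ω₀, ∀ ζ ∈ Ω₀, {x : Site d | η x ≠ ζ x}.Finite →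
        ∃ l : List (Site d × Bool),
          ζ = l.foldr (fun p σ => if p.2 then a p.1 σ else b p.1 σ) η))
    (f : Cfg d → ℝ) (hf : Measurable f) (C : ℝ) (hbd : ∀ η, |f η| ≤ C)
    (hfinv : ∀ x : Site d,
      (fun η => f (a x η)) =ᵐ[μ] f ∧ (fun η => f (b x η)) =ᵐ[μ] f) :
    ∃ c : ℝ, f =ᵐ[μ] fun _ => c := by
  rcases isEmpty_or_nonempty (Fin (2 * d)) with hE | hE
  · exact ⟨0, Filter.Eventually.of_forall fun η => (hE.false (η fun _ => 0)).elim⟩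
  obtain ⟨z⟩ := hE
  obtain ⟨Ω₀, hΩ₀1, hΩ₀inv, hΩ₀conn⟩ := hfull
  set step : Site d × Bool → Cfg d → Cfg d :=
    fun p σ => if p.2 then a p.1 σ else b p.1 σ with hstep_def
  set T : List (Site d × Bool) → Cfg d → Cfg d := fun l η => l.foldr step η with hT_def
  have hstepmp : ∀ p : Site d × Bool, MeasurePreserving (step p) μ μ := by
    intro p
    by_cases h : p.2 <;> simp only [hstep_def, h, if_true, if_false]
    · exact (hmp p.1).1
    · exact (hmp p.1).2
  have hTmp : ∀ l, MeasurePreserving (T l) μ μ := by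
    intro l
    induction l with
    | nil => exact MeasurePreserving.id μ
    | cons p l ih =>
        have : T (p :: l) = (step p) ∘ T l := rfl
        rw [this]
        exact (hstepmp p).comp ih
  set N : Set (Cfg d) := {η | ∃ x, ¬ f (a x η) = f η ∨ ¬ f (b x η) = f η} with hN_def
  have hN : μ N = 0 := by
    have hsub : N ⊆ ⋃ x : Site d,
        ({η | ¬ f (a x η) = f η} ∪ {η | ¬ f (b x η) = f η}) := by
      rintro η ⟨x, h⟩
      exact Set.mem_iUnion.mpr ⟨x, h.elim Or.inl Or.inr⟩
    refine measure_mono_null hsub (measure_iUnion_null fun x =>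
      measure_union_null ?_ ?_)
    · exact ae_iff.mp (hfinv x).1
    · exact ae_iff.mp (hfinv x).2
  set N' : Set (Cfg d) := ⋃ l : List (Site d × Bool), T l ⁻¹' N with hN'_def
  have hN' : μ N' = 0 :=
    measure_iUnion_null fun l => (hTmp l).quasiMeasurePreserving.preimage_null hN
  set Ω₁ : Set (Cfg d) := Ω₀ \ N' with hΩ₁_def
  have hΩ₁1 : μ Ω₁ = 1 := by rw [measure_diff_null hN', hΩ₀1]
  have hΩ₁sub : Ω₁ ⊆ Ω₀ := Set.diff_subset
  have hmemN' : ∀ η, η ∈ N' ↔ ∃ l, T l η ∈ N := by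
    intro η; simp [hN'_def]
  have hstepΩ : ∀ η ∈ Ω₁, ∀ p : Site d × Bool, step p η ∈ Ω₁ := by
    rintro η ⟨hη0, hη1⟩ p
    constructor
    · by_cases h : p.2 <;> simp only [hstep_def, h, if_true, if_false]
      · exact (hΩ₀inv η hη0 p.1).1
      · exact (hΩ₀inv η hη0 p.1).2
    · intro hmem
      obtain ⟨l, hl⟩ := (hmemN' _).mp hmem
      apply hη1
      refine (hmemN' η).mpr ⟨l ++ [p], ?_⟩
      have : T (l ++ [p]) η = T l (step p η) := by
        simp [hT_def, List.foldr_append]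
      rw [this]; exact hl
  have hfΩ : ∀ η ∈ Ω₁, ∀ p : Site d × Bool, f (step p η) = f η := by
    rintro η ⟨hη0, hη1⟩ p
    have hηN : η ∉ N := by
      intro h
      exact hη1 ((hmemN' η).mpr ⟨[], h⟩)
    simp only [hN_def, Set.mem_setOf_eq, not_exists, not_or, not_not] at hηN
    by_cases h : p.2 <;> simp only [hstep_def, h, if_true, if_false]
    · exact (hηN p.1).1
    · exact (hηN p.1).2
  have hTf : ∀ l, ∀ η ∈ Ω₁, T l η ∈ Ω₁ ∧ f (T l η) = f η := by
    intro l
    induction l with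
    | nil => exact fun η hη => ⟨hη, rfl⟩
    | cons p l ih =>
        intro η hη
        have h1 := ih η hη
        have : T (p :: l) η = step p (T l η) := rfl
        rw [this]
        exact ⟨hstepΩ _ h1.1 p, by rw [hfΩ _ h1.1 p, h1.2]⟩
  have hK4 : ∀ η ∈ Ω₁, ∀ ζ ∈ Ω₁, {x | η x ≠ ζ x}.Finite → f ζ = f η := by
    intro η hη ζ hζ hfin
    obtain ⟨l, hl⟩ := hΩ₀conn η (hΩ₁sub hη) ζ (hΩ₁sub hζ) hfin
    rw [hl]
    exact (hTf l η hη).2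
  set P : Cfg d → Prop := fun η => ∃ ζ, ζ ∈ Ω₁ ∧ {x | ζ x ≠ η x}.Finite with hP_def
  set g : Cfg d → ℝ := fun η => if h : P η then f h.choose else 0 with hg_def
  have hgval : ∀ (η ζ : Cfg d), ζ ∈ Ω₁ → {x | ζ x ≠ η x}.Finite → g η = f ζ := by
    intro η ζ hζ hfin
    have hP : P η := ⟨ζ, hζ, hfin⟩
    have hspec := hP.choose_spec
    simp only [hg_def, dif_pos hP]
    refine hK4 ζ hζ hP.choose hspec.1 ?_
    apply Set.Finite.subset (hfin.union hspec.2)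
    intro x hx
    by_contra hcon
    simp only [Set.mem_union, Set.mem_setOf_eq, not_or, not_not] at hcon
    exact hx (hcon.1.trans hcon.2.symm)
  have hgdiff : ∀ η η' : Cfg d, {x | η x ≠ η' x}.Finite → g η = g η' := by
    intro η η' hfin
    by_cases hP : P η
    · obtain ⟨ζ, hζ, hfin'⟩ := hP
      rw [hgval η ζ hζ hfin', hgval η' ζ hζ]
      apply Set.Finite.subset (hfin'.union hfin)
      intro x hx
      by_contra hcon
      simp only [Set.mem_union, Set.mem_setOf_eq, not_or, not_not] at hcon
      exact hx (hcon.1.trans hcon.2)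
    · have hP' : ¬ P η' := by
        rintro ⟨ζ, hζ, hfin'⟩
        refine hP ⟨ζ, hζ, ?_⟩
        apply Set.Finite.subset (hfin'.union hfin)
        intro x hx
        by_contra hcon
        simp only [Set.mem_union, Set.mem_setOf_eq, not_or, not_not] at hcon
        exact hx (hcon.1.trans hcon.2.symm)
      simp only [hg_def, dif_neg hP, dif_neg hP']
  have hC0 : (0 : ℝ) ≤ C := le_trans (abs_nonneg _) (hbd fun _ => z)
  have hgbd : ∀ η, |g η| ≤ C := by
    intro η
    simp only [hg_def]
    split
    · exact hbd _
    · simpa using hC0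
  have hgtail : TailMeasurableFun d g := by
    intro n
    refine ⟨fun r => g (fun x => if hx : n ≤ ∑ i, (x i).natAbs then r ⟨x, hx⟩ else z),
      fun η => ?_⟩
    apply hgdiff
    apply Set.Finite.subset (finite_ball n)
    intro x hx
    simp only [Set.mem_setOf_eq] at hx ⊢
    intro hle
    exact hx (by simp [dif_pos hle])
  obtain ⟨c, hc⟩ := htail g ⟨C, hgbd⟩ hgtail
  have hcnull : μ {η | ¬ g η = c} = 0 := ae_iff.mp hc
  have hsub : Ω₁ \ {η | ¬ g η = c} ⊆ {η | f η = c} := by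
    rintro η ⟨hη, hgη⟩
    simp only [Set.mem_setOf_eq, not_not] at hgη
    have : g η = f η := hgval η η hη (by simp)
    simp only [Set.mem_setOf_eq]
    rw [← this]
    exact hgη
  have h1 : μ {η | f η = c} = 1 := by
    refine le_antisymm prob_le_one ?_
    calc (1 : ENNReal) = μ Ω₁ := hΩ₁1.symm
    _ = μ (Ω₁ \ {η | ¬ g η = c}) := (measure_diff_null hcnull).symm
    _ ≤ μ {η | f η = c} := measure_mono hsub
  have hms : MeasurableSet {η | f η = c} := hf (measurableSet_singleton c)
  refine ⟨c, ae_iff.mpr ?_⟩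
  have heq : {η : Cfg d | ¬ f η = c} = Set.compl {η : Cfg d | f η = c} := by
    ext η; simp [Set.compl, Set.mem_setOf_eq]
  rw [heq]
  exact (prob_compl_eq_zero_iff hms).mpr h1

/-- let `μ` be tail trivial (every bounded tail-measurable function is a.s.
constant) and invariant under a family of commuting invertible measure-preserving
transformations `a_x` (with inverses `b_x`), such that on a full-measure invariant set any
two configurations differing in finitely many coordinates are related by a finite
composition of the `a_x` and their inverses.  Then every `f ∈ L²(μ)` with
`f = a_x f = a_x⁻¹ f` a.s. for all `x` is `μ`-a.s. constant. -/
theorem tail_trivial_implies_invariant_constant {d : ℕ}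
    (μ : Measure (Cfg d)) [IsProbabilityMeasure μ]
    (a b : Site d → Cfg d → Cfg d)
    (hmeas : ∀ x : Site d, Measurable (a x) ∧ Measurable (b x))
    (hmp : ∀ x : Site d, MeasurePreserving (a x) μ μ ∧ MeasurePreserving (b x) μ μ)
    (hinv : ∀ (x : Site d) (η : Cfg d), b x (a x η) = η ∧ a x (b x η) = η)
    (hcomm : ∀ (x y : Site d) (η : Cfg d), a x (a y η) = a y (a x η))
    (htail : ∀ g : Cfg d → ℝ, (∃ C, ∀ η, |g η| ≤ C) → TailMeasurableFun d g →
      ∃ c : ℝ, g =ᵐ[μ] fun _ => c)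
    (hfull : ∃ Ω₀ : Set (Cfg d), μ Ω₀ = 1 ∧
      (∀ η ∈ Ω₀, ∀ x : Site d, a x η ∈ Ω₀ ∧ b x η ∈ Ω₀) ∧
      (∀ η ∈ Ω₀, ∀ ζ ∈ Ω₀, {x : Site d | η x ≠ ζ x}.Finite →
        ∃ l : List (Site d × Bool),
          ζ = l.foldr (fun p σ => if p.2 then a p.1 σ else b p.1 σ) η))
    (f : Cfg d → ℝ) (hf : Measurable f) (hf2 : MemLp f 2 μ)
    (hfinv : ∀ x : Site d,
      (fun η => f (a x η)) =ᵐ[μ] f ∧ (fun η => f (b x η)) =ᵐ[μ] f) :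
    ∃ c : ℝ, f =ᵐ[μ] fun _ => c := by
  have hbd : ∀ M : ℕ, ∀ η, |max (-(M:ℝ)) (min (f η) M)| ≤ M := by
    intro M η
    rw [abs_le]
    constructor
    · exact le_max_left _ _
    · refine max_le ?_ (min_le_right _ _)
      have : (0:ℝ) ≤ M := Nat.cast_nonneg M
      linarith
  have hmeasM : ∀ M : ℕ, Measurable (fun η => max (-(M:ℝ)) (min (f η) M)) :=
    fun M => measurable_const.max (hf.min measurable_const)
  have hinvM : ∀ M : ℕ, ∀ x : Site d,
      (fun η => max (-(M:ℝ)) (min (f (a x η)) M)) =ᵐ[μ]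
        (fun η => max (-(M:ℝ)) (min (f η) M)) ∧
      (fun η => max (-(M:ℝ)) (min (f (b x η)) M)) =ᵐ[μ]
        (fun η => max (-(M:ℝ)) (min (f η) M)) := by
    intro M x
    constructor
    · filter_upwards [(hfinv x).1] with η h
      rw [show f (a x η) = f η from h]
    · filter_upwards [(hfinv x).2] with η h
      rw [show f (b x η) = f η from h]
  have hcM : ∀ M : ℕ, ∃ c : ℝ,
      (fun η => max (-(M:ℝ)) (min (f η) M)) =ᵐ[μ] fun _ => c := by
    intro M
    exact aux_bounded μ a b hmp htail hfull _ (hmeasM M) M (hbd M) (hinvM M)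
  choose cM hcMspec using hcM
  set A : Set (Cfg d) := (⋃ M : ℕ, {η | ¬ max (-(M:ℝ)) (min (f η) M) = cM M})ᶜ
    with hA_def
  have hAc : μ Aᶜ = 0 := by
    rw [hA_def, compl_compl]
    exact measure_iUnion_null fun M => ae_iff.mp (hcMspec M)
  have hAmem : ∀ η ∈ A, ∀ M : ℕ, max (-(M:ℝ)) (min (f η) M) = cM M := by
    intro η hη M
    simp only [hA_def, Set.mem_compl_iff, Set.mem_iUnion, Set.mem_setOf_eq,
      not_exists, not_not] at hη
    exact hη M
  have hAne : A.Nonempty := by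
    rw [Set.nonempty_iff_ne_empty]
    intro h
    have : Aᶜ = Set.univ := by rw [h, Set.compl_empty]
    rw [this] at hAc
    have : (1 : ENNReal) = 0 := by rw [← measure_univ (μ := μ), hAc]
    exact one_ne_zero this
  obtain ⟨η₀, hη₀⟩ := hAne
  have htrunc : ∀ (η : Cfg d) (M : ℕ), |f η| ≤ M →
      max (-(M:ℝ)) (min (f η) M) = f η := by
    intro η M hM
    rw [abs_le] at hM
    rw [min_eq_left hM.2, max_eq_right hM.1]
  refine ⟨f η₀, ae_iff.mpr (measure_mono_null ?_ hAc)⟩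
  intro η hη
  simp only [Set.mem_setOf_eq] at hη
  by_contra hcon
  simp only [Set.mem_compl_iff, not_not] at hcon
  apply hη
  obtain ⟨M, hM⟩ := exists_nat_ge (max |f η| |f η₀|)
  have h1 : |f η| ≤ M := le_trans (le_max_left _ _) hM
  have h2 : |f η₀| ≤ M := le_trans (le_max_right _ _) hM
  calc f η = max (-(M:ℝ)) (min (f η) M) := (htrunc η M h1).symm
  _ = cM M := hAmem η hcon M
  _ = max (-(M:ℝ)) (min (f η₀) M) := (hAmem η₀ hη₀ M).symm
  _ = f η₀ := htrunc η₀ M h2
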